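/- Let n and r be positive integers. If n ≥ 2r−1, then there exists a real number μ with E_{2r,1}^μ(n) ≠ 0, and there exists a real number μ with D_{2r−1,1}^μ(n) ≠ 0. If n ≥ 2r+1, then there exists a real number μ with E_{−1,2r}^μ(n) ≠ 0, and there exists a real number μ with D_{−1,2r+1}^μ(n) ≠ 0. (That is, each of these determinants, regarded as a polynomial in μ, is not identically zero.) -/

import Mathlib

open Finset

/-- The determinant `E_{s,t}^μ(n)` with entries `C(μ+i+j+s+t-4, j+t-1) - δ_{i+s,j+t}`
(1-based indices `i,j`), where `C` is the generalized binomial coefficient. -/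
noncomputable def detE (μ : ℝ) (s : ℤ) (t : ℕ) (n : ℕ) : ℝ :=
  Matrix.det (Matrix.of fun i j : Fin n =>
    Ring.choose (μ + (i.1 + 1 : ℕ) + (j.1 + 1 : ℕ) + s + t - 4) (j.1 + t) -
      if (i.1 + 1 : ℤ) + s = (j.1 + 1 : ℤ) + t then 1 else 0)

/-- The determinant `D_{s,t}^μ(n)` with entries `C(μ+i+j+s+t-4, j+t-1) + δ_{i+s,j+t}`. -/
noncomputable def detD (μ : ℝ) (s : ℤ) (t : ℕ) (n : ℕ) : ℝ :=
  Matrix.det (Matrix.of fun i j : Fin n =>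
    Ring.choose (μ + (i.1 + 1 : ℕ) + (j.1 + 1 : ℕ) + s + t - 4) (j.1 + t) +
      if (i.1 + 1 : ℤ) + s = (j.1 + 1 : ℤ) + t then 1 else 0)

/-- The rising factorial (Pochhammer symbol) `(a)_b = a(a+1)⋯(a+b-1)`. -/
noncomputable def poch (a : ℝ) (b : ℕ) : ℝ := (ascPochhammer ℝ b).eval a

open Matrix

namespace DetNonzeroAux

def binMat {m : ℕ} (a b : Fin m → ℕ) : Matrix (Fin m) (Fin m) ℝ :=
  Matrix.of fun i j => (((a i + b j).choose (b j) : ℕ) : ℝ)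

lemma binMat_apply {m : ℕ} (a b : Fin m → ℕ) (i j : Fin m) :
    binMat a b i j = (((a i + b j).choose (b j) : ℕ) : ℝ) := rfl

lemma sum_Ico_choose (k A B : ℕ) (hAB : A ≤ B) :
    (A + (k+1)).choose (k+1) + ∑ l ∈ Finset.Ico A B, (l + (k+1)).choose k
      = (B + (k+1)).choose (k+1) := by
  induction B with
  | zero => interval_cases A; simp
  | succ B ih =>
    rcases Nat.lt_or_ge A (B+1) with h | h
    · have hA : A ≤ B := by omega
      rw [Finset.sum_Ico_succ_top hA, ← Nat.add_assoc, ih hA]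
      rw [show B + 1 + (k+1) = (B + (k+1)) + 1 by ring, Nat.choose_succ_succ' (B + (k+1)) k]
      omega
    · have : A = B + 1 := by omega
      subst this; simp

/-- Special case of positivity, assuming `b 0 = 0`, with inductive hypothesis supplied. -/
lemma det_binMat_pos_special (q : ℕ)
    (ih : ∀ a b : Fin q → ℕ, StrictMono a → StrictMono b → 0 < (binMat a b).det)
    (a b : Fin (q+1) → ℕ) (ha : StrictMono a) (hb : StrictMono b) (hb0 : b 0 = 0) :
    0 < (binMat a b).det := by
  classical
  -- difference matrix V
  set V : Matrix (Fin (q+1)) (Fin (q+1)) ℝ := Matrix.of (fun i j =>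
    Fin.cases (binMat a b 0 j)
      (fun i' => binMat a b i'.succ j - binMat a b i'.castSucc j) i) with hV
  have hdetV : (binMat a b).det = V.det := by
    apply Matrix.det_eq_of_forall_row_eq_smul_add_pred (c := fun _ => (1:ℝ))
    · intro j; simp [hV]
    · intro i j; simp [hV]
  -- rows of V as sums
  set A : Fin (q+1) → Finset ℕ := fun i =>
    Fin.cases {0} (fun i' => Finset.Ico (a i'.castSucc) (a i'.succ)) i with hA
  set g : Fin (q+1) → ℕ → (Fin (q+1) → ℝ) := fun i =>
    Fin.cases (fun _ j => binMat a b 0 j)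
      (fun _ l j => if b j = 0 then 0 else (((l + b j).choose (b j - 1) : ℕ) : ℝ)) i with hg
  have hrow : ∀ i : Fin (q+1), (V i : Fin (q+1) → ℝ) = ∑ l ∈ A i, g i l := by
    intro i
    induction i using Fin.cases with
    | zero => funext j; simp [hA, hg, hV]
    | succ i' =>
      funext j
      simp only [hA, hg, hV, Fin.cases_succ, Matrix.of_apply, Finset.sum_apply]
      rcases Nat.eq_zero_or_pos (b j) with h0 | hpos
      · simp [binMat_apply, h0, sub_self]
      · obtain ⟨k, hk⟩ : ∃ k, b j = k + 1 := ⟨b j - 1, by omega⟩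
        have hmono : a i'.castSucc ≤ a i'.succ := le_of_lt (ha (Fin.castSucc_lt_succ (i := i')))
        have key := sum_Ico_choose k (a i'.castSucc) (a i'.succ) hmono
        have : ((( a i'.castSucc + (k+1)).choose (k+1) : ℕ) : ℝ)
              + ∑ l ∈ Finset.Ico (a i'.castSucc) (a i'.succ), (((l + (k+1)).choose k : ℕ) : ℝ)
            = (((a i'.succ + (k+1)).choose (k+1) : ℕ) : ℝ) := by
          exact_mod_cast congrArg (fun x : ℕ => (x : ℝ)) key
        simp only [binMat_apply, hk]
        have hne : ¬ (k + 1 = 0) := by omega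
        simp only [hne, if_false]
        rw [show k + 1 - 1 = k from rfl]
        linarith [this]
  -- multilinear expansion
  have hVdet : V.det = ∑ ρ ∈ Fintype.piFinset A,
      (Matrix.of fun i j => g i (ρ i) j).det := by
    have := (Matrix.detRowAlternating :
        (Fin (q+1) → ℝ) [⋀^Fin (q+1)]→ₗ[ℝ] ℝ).toMultilinearMap.map_sum_finset g A
    calc V.det = Matrix.detRowAlternating (fun i => V i) := rfl
    _ = Matrix.detRowAlternating (fun i => ∑ l ∈ A i, g i l) := by
          congr 1; funext i; exact hrow i
    _ = ∑ ρ ∈ Fintype.piFinset A, Matrix.detRowAlternating (fun i => g i (ρ i)) := this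
    _ = _ := rfl
  -- each summand is positive
  have hterm : ∀ ρ ∈ Fintype.piFinset A, 0 < (Matrix.of fun i j => g i (ρ i) j).det := by
    intro ρ hρ
    have hmem : ∀ i, ρ i ∈ A i := fun i => (Fintype.mem_piFinset.mp hρ) i
    set W : Matrix (Fin (q+1)) (Fin (q+1)) ℝ := Matrix.of fun i j => g i (ρ i) j with hW
    have hbpos : ∀ j : Fin q, 1 ≤ b j.succ := by
      intro j
      have := hb (show (0 : Fin (q+1)) < j.succ from Fin.succ_pos j)
      omega
    -- expand along the first column
    have hcol : W.det = (W.submatrix Fin.succ Fin.succ).det := by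
      rw [Matrix.det_succ_column_zero]
      rw [Finset.sum_eq_single 0]
      · simp [hW, hg, binMat_apply, hb0, Fin.zero_succAbove]
      · intro i _ hi
        obtain ⟨i', rfl⟩ : ∃ i', i = i'.succ := ⟨i.pred hi, (Fin.succ_pred i hi).symm⟩
        simp [hW, hg, hb0]
      · intro h; exact absurd (Finset.mem_univ _) h
    set a' : Fin q → ℕ := fun i => ρ i.succ + 1 with ha'
    set b' : Fin q → ℕ := fun j => b j.succ - 1 with hb'
    have hsub : W.submatrix Fin.succ Fin.succ = binMat a' b' := by
      ext i j
      have h1 : (1:ℕ) ≤ b j.succ := hbpos j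
      have hne : ¬ (b j.succ = 0) := by omega
      simp only [Matrix.submatrix_apply, hW, Matrix.of_apply, hg, Fin.cases_succ, hne, if_false,
        binMat_apply, ha', hb']
      rw [show ρ i.succ + 1 + (b j.succ - 1) = ρ i.succ + b j.succ by omega]
    have hρlt : ∀ i : Fin q, a i.castSucc ≤ ρ i.succ ∧ ρ i.succ < a i.succ := by
      intro i
      have := hmem i.succ
      simp only [hA, Fin.cases_succ, Finset.mem_Ico] at this
      exact this
    have hma : StrictMono a' := by
      intro i k hik
      have h1 := (hρlt i).2
      have h2 := (hρlt k).1
      have h3 : a i.succ ≤ a k.castSucc := by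
        apply ha.monotone
        rw [Fin.le_def]
        simp only [Fin.val_succ, Fin.coe_castSucc]
        exact hik
      simp only [ha']
      omega
    have hmb : StrictMono b' := by
      intro i k hik
      have h1 := hbpos i
      have := hb (show i.succ < k.succ by exact Fin.succ_lt_succ_iff.mpr hik)
      simp only [hb']
      omega
    rw [hW] at hcol ⊢
    rw [hcol, hsub]
    exact ih a' b' hma hmb
  have hne : (Fintype.piFinset A).Nonempty := by
    rw [Fintype.piFinset_nonempty]
    intro i
    induction i using Fin.cases with
    | zero => exact ⟨0, by simp [hA]⟩
    | succ i' =>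
      refine ⟨a i'.castSucc, ?_⟩
      simp only [hA, Fin.cases_succ, Finset.mem_Ico]
      exact ⟨le_refl _, ha (Fin.castSucc_lt_succ (i := i'))⟩
  rw [hdetV, hVdet]
  exact Finset.sum_pos hterm hne


/-- Positivity of the binomial determinant for strictly monotone parameters. -/
theorem det_binMat_pos : ∀ (m : ℕ) (a b : Fin m → ℕ), StrictMono a → StrictMono b →
    0 < (binMat a b).det := by
  intro m
  induction m with
  | zero => intro a b _ _; simp [Matrix.det_fin_zero]
  | succ q ih =>
    intro a b ha hb
    set β := b 0 with hβdef
    set a₂ : Fin (q+1) → ℕ := fun i => a i + β with ha₂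
    set b₂ : Fin (q+1) → ℕ := fun j => b j - β with hb₂
    have hβ : ∀ j, β ≤ b j := fun j => hb.monotone (Fin.zero_le j)
    have key : ∀ i j, ((b j).choose β : ℝ) * binMat a b i j
        = (((a i + β).choose β : ℕ) : ℝ) * binMat a₂ b₂ i j := by
      intro i j
      have h := Nat.choose_mul (n := a i + b j) (k := a i + β) (s := a i)
        (by omega)
      have hs1 : (a i + β).choose (a i) = (a i + β).choose β := by
        have := Nat.choose_symm (n := a i + β) (k := β) (by omega)
        rw [show a i + β - β = a i by omega] at this
        exact this
      have hs2 : (a i + b j).choose (a i) = (a i + b j).choose (b j) := by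
        have := Nat.choose_symm (n := a i + b j) (k := b j) (by omega)
        rw [show a i + b j - b j = a i by omega] at this
        exact this
      have hs3 : (a i + b j).choose (a i + β) = (a i + b j).choose (b j - β) := by
        have := Nat.choose_symm (n := a i + b j) (k := b j - β) (by have := hβ j; omega)
        rw [show a i + b j - (b j - β) = a i + β by have := hβ j; omega] at this
        exact this
      rw [show a i + b j - a i = b j by omega, show a i + β - a i = β by omega,
        hs1, hs2, hs3] at h
      -- h : (a i + b j).choose (b j - β) * (a i + β).choose β
      --      = (a i + b j).choose (b j) * (b j).choose β
      simp only [binMat_apply, ha₂, hb₂]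
      rw [show a i + β + (b j - β) = a i + b j by have := hβ j; omega]
      norm_cast
      calc (b j).choose β * (a i + b j).choose (b j)
          = (a i + b j).choose (b j) * (b j).choose β := Nat.mul_comm _ _
        _ = (a i + b j).choose (b j - β) * (a i + β).choose β := h.symm
        _ = (a i + β).choose β * (a i + b j).choose (b j - β) := Nat.mul_comm _ _
    have hdeteq : (∏ j, (((b j).choose β : ℕ) : ℝ)) * (binMat a b).det
        = (∏ i, (((a i + β).choose β : ℕ) : ℝ)) * (binMat a₂ b₂).det := by
      rw [← Matrix.det_mul_row, ← Matrix.det_mul_column]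
      congr 1
      ext i j
      exact key i j
    have hP : 0 < ∏ j, (((b j).choose β : ℕ) : ℝ) := by
      apply Finset.prod_pos
      intro j _
      exact_mod_cast Nat.choose_pos (hβ j)
    have hQ : 0 < ∏ i, (((a i + β).choose β : ℕ) : ℝ) := by
      apply Finset.prod_pos
      intro i _
      exact_mod_cast Nat.choose_pos (by omega : β ≤ a i + β)
    have hY : 0 < (binMat a₂ b₂).det := by
      apply det_binMat_pos_special q ih
      · intro i k hik
        simp only [ha₂]
        exact Nat.add_lt_add_right (ha hik) β
      · intro i k hik
        have h1 := hβ i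
        have h2 := hb hik
        simp only [hb₂]
        omega
      · simp [hb₂, hβdef]
    nlinarith [hdeteq, hP, hQ, hY, mul_pos hQ hY]


/-- Positivity of the perturbed binomial determinant: perturbations sit on a strictly
monotone partial matching with sign condition `0 ≤ w p * (-1)^(r p + c p)`. -/
theorem det_pert_pos : ∀ (k : ℕ) (m : ℕ) (a b : Fin m → ℕ), StrictMono a → StrictMono b →
    ∀ (r c : Fin k → Fin m), StrictMono r → StrictMono c → ∀ (w : Fin k → ℝ),
    (∀ p, 0 ≤ w p * (-1) ^ ((r p : ℕ) + (c p : ℕ))) →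
    0 < (binMat a b + ∑ p, w p • Matrix.single (r p) (c p) (1:ℝ)).det := by
  intro k
  induction k with
  | zero =>
    intro m a b ha hb r c hr hc w hw
    simpa using det_binMat_pos m a b ha hb
  | succ k ih =>
    intro m a b ha hb r c hr hc w hw
    -- m must be a successor
    obtain ⟨m', rfl⟩ : ∃ m', m = m' + 1 := by
      cases m with
      | zero => exact (r 0).elim0
      | succ m' => exact ⟨m', rfl⟩
    set i₀ := r (Fin.last k) with hi₀
    set j₀ := c (Fin.last k) with hj₀
    set M' : Matrix (Fin (m'+1)) (Fin (m'+1)) ℝ :=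
      binMat a b + ∑ p : Fin k, w p.castSucc •
        Matrix.single (r p.castSucc) (c p.castSucc) (1:ℝ) with hM'
    have hsplit : binMat a b + ∑ p, w p • Matrix.single (r p) (c p) (1:ℝ)
        = Matrix.updateRow M' i₀
            (M' i₀ + w (Fin.last k) • (Pi.single j₀ 1 : Fin (m'+1) → ℝ)) := by
      rw [Fin.sum_univ_castSucc]
      ext i j
      by_cases hii : i = i₀
      · subst hii
        rw [Matrix.updateRow_self]
        simp only [Matrix.add_apply, Pi.add_apply, Pi.smul_apply, Pi.single_apply,
          Matrix.smul_apply, Matrix.single, Matrix.of_apply, smul_eq_mul, hM',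
          Matrix.sum_apply]
        by_cases hjj : j = j₀
        · subst hjj
          simp only [hj₀.symm, hi₀.symm, if_pos rfl, and_true, eq_self_iff_true, if_true, true_and]
          ring
        · have h1 : ¬(c (Fin.last k) = j) := fun h => hjj (by rw [hj₀, h])
          simp only [h1, and_false, if_false, hjj, if_neg]
          ring
      · rw [Matrix.updateRow_ne hii]
        simp only [Matrix.add_apply, Matrix.sum_apply, Matrix.smul_apply,
          Matrix.single, Matrix.of_apply, smul_eq_mul, hM']
        have hz : ¬(r (Fin.last k) = i) := fun h => hii (by rw [hi₀, h])
        simp only [hz, false_and, if_false]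
        ring
    rw [hsplit]
    rw [Matrix.det_updateRow_add, Matrix.updateRow_eq_self]
    have hM'pos : 0 < M'.det := by
      apply ih (m'+1) a b ha hb _ _ (hr.comp Fin.strictMono_castSucc)
        (hc.comp Fin.strictMono_castSucc)
      intro p
      exact hw p.castSucc
    -- the cofactor term
    rw [Matrix.det_updateRow_smul]
    have hcof : (Matrix.updateRow M' i₀ (Pi.single j₀ (1:ℝ))).det
        = (-1) ^ ((i₀ : ℕ) + (j₀ : ℕ)) *
          (M'.submatrix i₀.succAbove j₀.succAbove).det := by
      rw [Matrix.det_succ_row _ i₀]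
      rw [Finset.sum_eq_single j₀]
      · rw [Matrix.updateRow_self]
        simp only [Pi.single_eq_same, mul_one]
        rw [Matrix.submatrix_updateRow_succAbove]
      · intro j _ hj
        rw [Matrix.updateRow_self]
        simp [Pi.single_eq_of_ne hj]
      · intro h; exact absurd (Finset.mem_univ _) h
    rw [hcof]
    -- identify the submatrix as a smaller perturbed binomial matrix
    have hrlt : ∀ p : Fin k, (r p.castSucc : ℕ) < (i₀ : ℕ) := by
      intro p
      exact hr (Fin.castSucc_lt_last p)
    have hclt : ∀ p : Fin k, (c p.castSucc : ℕ) < (j₀ : ℕ) := by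
      intro p
      exact hc (Fin.castSucc_lt_last p)
    set r' : Fin k → Fin m' := fun p => ⟨(r p.castSucc : ℕ), by
      have h1 := hrlt p
      have h2 : (i₀ : ℕ) ≤ m' := Nat.lt_succ_iff.mp i₀.isLt
      omega⟩ with hr'
    set c' : Fin k → Fin m' := fun p => ⟨(c p.castSucc : ℕ), by
      have h1 := hclt p
      have h2 : (j₀ : ℕ) ≤ m' := Nat.lt_succ_iff.mp j₀.isLt
      omega⟩ with hc'
    have hfr : ∀ p : Fin k, i₀.succAbove (r' p) = r p.castSucc := by
      intro p
      rw [Fin.succAbove_of_castSucc_lt]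
      · apply Fin.ext; simp [hr']
      · rw [Fin.lt_def]; simpa [hr'] using hrlt p
    have hfc : ∀ p : Fin k, j₀.succAbove (c' p) = c p.castSucc := by
      intro p
      rw [Fin.succAbove_of_castSucc_lt]
      · apply Fin.ext; simp [hc']
      · rw [Fin.lt_def]; simpa [hc'] using hclt p
    have hsubm : M'.submatrix i₀.succAbove j₀.succAbove
        = binMat (a ∘ i₀.succAbove) (b ∘ j₀.succAbove)
          + ∑ p : Fin k, w p.castSucc • Matrix.single (r' p) (c' p) (1:ℝ) := by
      ext i j
      simp only [Matrix.submatrix_apply, hM', Matrix.add_apply, Matrix.sum_apply,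
        Matrix.smul_apply, smul_eq_mul, Matrix.single, Matrix.of_apply,
        Function.comp_apply, binMat_apply]
      congr 1
      apply Finset.sum_congr rfl
      intro p _
      congr 1
      have hiff : (r p.castSucc = i₀.succAbove i ∧ c p.castSucc = j₀.succAbove j)
          ↔ (r' p = i ∧ c' p = j) := by
        rw [← hfr p, ← hfc p]
        constructor
        · rintro ⟨h1, h2⟩
          exact ⟨Fin.succAbove_right_injective h1.symm |>.symm,
            Fin.succAbove_right_injective h2.symm |>.symm⟩
        · rintro ⟨h1, h2⟩; exact ⟨by rw [h1], by rw [h2]⟩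
      simp only [hiff]
    rw [hsubm]
    have hsubpos : 0 < (binMat (a ∘ i₀.succAbove) (b ∘ j₀.succAbove)
          + ∑ p : Fin k, w p.castSucc • Matrix.single (r' p) (c' p) (1:ℝ)).det := by
      apply ih m' _ _ (ha.comp (Fin.strictMono_succAbove i₀))
        (hb.comp (Fin.strictMono_succAbove j₀)) r' c'
      · intro p p' hpp
        rw [Fin.lt_def]
        simp only [hr']
        exact hr (by exact Fin.castSucc_lt_castSucc_iff.mpr hpp)
      · intro p p' hpp
        rw [Fin.lt_def]
        simp only [hc']
        exact hc (by exact Fin.castSucc_lt_castSucc_iff.mpr hpp)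
      · intro p
        exact hw p.castSucc
    have hlast := hw (Fin.last k)
    have : 0 ≤ w (Fin.last k) * ((-1) ^ ((i₀:ℕ) + (j₀:ℕ)) *
        (binMat (a ∘ i₀.succAbove) (b ∘ j₀.succAbove)
          + ∑ p : Fin k, w p.castSucc • Matrix.single (r' p) (c' p) (1:ℝ)).det) := by
      rw [← mul_assoc]
      exact mul_nonneg hlast (le_of_lt hsubpos)
    linarith


/-- Main positivity helper: binomial-type matrix with a constant perturbation `ε` on the
shifted diagonal `i + co = j + ro` has positive determinant, provided the sign condition. -/
lemma helper (n A0 t ro co : ℕ) (hroco : ro = 0 ∨ co = 0) (ε : ℝ)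
    (hsign : 0 ≤ ε * (-1:ℝ)^(ro+co)) :
    0 < (Matrix.of fun i j : Fin n =>
      ((((A0 + i.1) + (j.1 + t)).choose (j.1 + t) : ℕ) : ℝ) +
        (if i.1 + co = j.1 + ro then ε else 0)).det := by
  classical
  set q := n - (ro + co) with hq
  set a : Fin n → ℕ := fun i => A0 + i.1 with ha
  set b : Fin n → ℕ := fun j => j.1 + t with hb
  have hrlt : ∀ p : Fin q, p.1 + ro < n := fun p => by have := p.2; omega
  have hclt : ∀ p : Fin q, p.1 + co < n := fun p => by have := p.2; omega
  set rr : Fin q → Fin n := fun p => ⟨p.1 + ro, hrlt p⟩ with hrr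
  set cc : Fin q → Fin n := fun p => ⟨p.1 + co, hclt p⟩ with hcc
  have hmat : (Matrix.of fun i j : Fin n =>
      ((((A0 + i.1) + (j.1 + t)).choose (j.1 + t) : ℕ) : ℝ) +
        (if i.1 + co = j.1 + ro then ε else 0))
      = binMat a b + ∑ p : Fin q, (fun _ : Fin q => ε) p •
          Matrix.single (rr p) (cc p) (1:ℝ) := by
    ext i j
    simp only [Matrix.of_apply, Matrix.add_apply, Matrix.sum_apply, Matrix.smul_apply,
      smul_eq_mul, Matrix.single, binMat_apply, ha, hb]
    congr 1
    by_cases hc : i.1 + co = j.1 + ro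
    · have hplt : min i.1 j.1 < q := by
        have h1 := i.2; have h2 := j.2
        rcases hroco with h | h <;> omega
      rw [if_pos hc]
      rw [Finset.sum_eq_single (⟨min i.1 j.1, hplt⟩ : Fin q)]
      · have hcond : rr ⟨min i.1 j.1, hplt⟩ = i ∧ cc ⟨min i.1 j.1, hplt⟩ = j := by
          constructor <;> (apply Fin.ext; simp only [hrr, hcc]) <;>
            rcases hroco with h | h <;> omega
        rw [if_pos hcond, mul_one]
      · intro p _ hp
        rw [if_neg, mul_zero]
        rintro ⟨h1, h2⟩
        apply hp
        apply Fin.ext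
        have e1 : p.1 + ro = i.1 := congrArg Fin.val h1
        have e2 : p.1 + co = j.1 := congrArg Fin.val h2
        simp only
        omega
      · intro h; exact absurd (Finset.mem_univ _) h
    · rw [if_neg hc]
      apply (Finset.sum_eq_zero ?_).symm
      intro p _
      rw [if_neg, mul_zero]
      rintro ⟨h1, h2⟩
      have e1 : p.1 + ro = i.1 := congrArg Fin.val h1
      have e2 : p.1 + co = j.1 := congrArg Fin.val h2
      omega
  rw [hmat]
  apply det_pert_pos q n a b
  · intro x y hxy; simp only [ha]; omega
  · intro x y hxy; simp only [hb]; omega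
  · intro x y hxy; rw [Fin.lt_def]; simp only [hrr]; omega
  · intro x y hxy; rw [Fin.lt_def]; simp only [hcc]; omega
  · intro p
    have he : ((rr p : ℕ) + (cc p : ℕ)) = (p.1 + p.1) + (ro + co) := by
      simp only [hrr, hcc]; omega
    rw [he, pow_add, Even.neg_one_pow ⟨p.1, rfl⟩, one_mul]
    exact hsign


lemma entry_eq (X : ℝ) (N k : ℕ) (hX : X = (N:ℝ)) :
    Ring.choose X k = ((N.choose k : ℕ) : ℝ) := by
  rw [hX]
  exact_mod_cast Ring.choose_natCast (R := ℝ) N k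

end DetNonzeroAux

open DetNonzeroAux in
/-- Non-vanishing (as polynomials in `μ`) of the determinants `E_{2r,1}`, `D_{2r-1,1}`,
`E_{-1,2r}`, and `D_{-1,2r+1}`. -/
theorem determinants_nonzero (n r : ℕ) (hn : 1 ≤ n) (hr : 1 ≤ r) :
    (2 * r - 1 ≤ n →
      (∃ μ : ℝ, detE μ (2 * r) 1 n ≠ 0) ∧ (∃ μ : ℝ, detD μ (2 * r - 1) 1 n ≠ 0)) ∧
    (2 * r + 1 ≤ n →
      (∃ μ : ℝ, detE μ (-1) (2 * r) n ≠ 0) ∧ (∃ μ : ℝ, detD μ (-1) (2 * r + 1) n ≠ 0)) := by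
  classical
  have key : ∀ (A0 t ro co : ℕ), (ro = 0 ∨ co = 0) → ∀ (ε : ℝ),
      0 ≤ ε * (-1:ℝ)^(ro+co) →
      ∀ (M : Matrix (Fin n) (Fin n) ℝ),
      (∀ i j : Fin n, M i j = ((((A0 + i.1) + (j.1 + t)).choose (j.1 + t) : ℕ) : ℝ) +
        (if i.1 + co = j.1 + ro then ε else 0)) → M.det ≠ 0 := by
    intro A0 t ro co hroco ε hsg M hM
    have hMeq : M = Matrix.of fun i j : Fin n =>
        ((((A0 + i.1) + (j.1 + t)).choose (j.1 + t) : ℕ) : ℝ) +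
          (if i.1 + co = j.1 + ro then ε else 0) := by
      ext i j
      rw [hM i j]
      rfl
    rw [hMeq]
    exact ne_of_gt (helper n A0 t ro co hroco ε hsg)
  refine ⟨fun _ => ⟨⟨3, ?_⟩, ⟨3, ?_⟩⟩, fun _ => ⟨⟨3, ?_⟩, ⟨3, ?_⟩⟩⟩
  · -- E_{2r,1}
    unfold detE
    apply key (2*r+1) 1 0 (2*r-1) (Or.inl rfl) (-1)
    · rw [zero_add, Odd.neg_one_pow ⟨r-1, by omega⟩]
      norm_num
    · intro i j
      simp only [Matrix.of_apply]
      rw [entry_eq _ (((2*r+1) + i.1) + (j.1 + 1)) _ (by push_cast; ring)]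
      split_ifs with h1 h2 h2
      · ring
      · exfalso; omega
      · exfalso; omega
      · ring
  · -- D_{2r-1,1}
    unfold detD
    apply key (2*r) 1 0 (2*r-2) (Or.inl rfl) 1
    · rw [zero_add, Even.neg_one_pow ⟨r-1, by omega⟩]
      norm_num
    · intro i j
      simp only [Matrix.of_apply]
      rw [entry_eq _ (((2*r) + i.1) + (j.1 + 1)) _ (by push_cast; ring)]
      split_ifs with h1 h2 h2
      · ring
      · exfalso; omega
      · exfalso; omega
      · ring
  · -- E_{-1,2r}
    unfold detE
    apply key 0 (2*r) (2*r+1) 0 (Or.inr rfl) (-1)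
    · rw [add_zero, Odd.neg_one_pow ⟨r, by omega⟩]
      norm_num
    · intro i j
      simp only [Matrix.of_apply]
      rw [entry_eq _ ((0 + i.1) + (j.1 + 2*r)) _ (by push_cast; ring)]
      split_ifs with h1 h2 h2
      · ring
      · exfalso; omega
      · exfalso; omega
      · ring
  · -- D_{-1,2r+1}
    unfold detD
    apply key 0 (2*r+1) (2*r+2) 0 (Or.inr rfl) 1
    · rw [add_zero, Even.neg_one_pow ⟨r+1, by omega⟩]
      norm_num
    · intro i j
      simp only [Matrix.of_apply]
      rw [entry_eq _ ((0 + i.1) + (j.1 + (2*r+1))) _ (by push_cast; ring)]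
      split_ifs with h1 h2 h2
      · ring
      · exfalso; omega
      · exfalso; omega
      · ring
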